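/- arXiv:1111.6505 — 3 statements merged into one kernel-verified Lean document; each statement's English description precedes it below -/
import Mathlib

section
/- Let F be a finite-dimensional real inner product space and let T : ℝⁿ → F be twice continuously differentiable. At every point x where T(x) ≠ 0, the function y ↦ ‖T(y)‖ is twice continuously differentiable in a neighborhood of x and satisfies ‖T(x)‖·Δ(‖T‖)(x) ≥ ⟨T(x), ΔT(x)⟩; equivalently, −‖T‖·Δ‖T‖ ≤ −⟨T, ΔT⟩ at x. -/
open scoped RealInnerProductSpace

/-- The componentwise Laplacian `ΔT = ∑_{i=1}^n ∂²T/∂x_i²` of a map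
`T : ℝⁿ → F`, expressed via the second iterated Fréchet derivative. -/
noncomputable def lap {n : ℕ} {F : Type*} [NormedAddCommGroup F] [NormedSpace ℝ F]
    (T : EuclideanSpace ℝ (Fin n) → F) (x : EuclideanSpace ℝ (Fin n)) : F :=
  ∑ i : Fin n,
    iteratedFDeriv ℝ 2 T x ![EuclideanSpace.single i 1, EuclideanSpace.single i 1]

/-- 1D second derivative test at a local minimum. -/
lemma second_deriv_test_aux {φ φ' : ℝ → ℝ} {c : ℝ}
    (hmin : IsLocalMin φ 0)
    (hd : ∀ᶠ t in nhds (0:ℝ), HasDerivAt φ (φ' t) t)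
    (hd2 : HasDerivAt φ' c 0) : 0 ≤ c := by
  by_contra hc
  push_neg at hc
  have h0 : φ' 0 = 0 := hmin.hasDerivAt_eq_zero hd.self_of_nhds
  have hslope : Filter.Tendsto (fun t => φ' t / t) (nhdsWithin 0 {(0:ℝ)}ᶜ) (nhds c) := by
    have h1 := hasDerivAt_iff_tendsto_slope.1 hd2
    have heq : slope φ' 0 = fun t => φ' t / t := by
      funext t; rw [slope_def_field]; rw [h0]; ring
    rwa [heq] at h1
  have hev : ∀ᶠ t in nhdsWithin 0 {(0:ℝ)}ᶜ, φ' t / t < 0 :=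
    hslope.eventually (Iio_mem_nhds hc)
  have hev' : ∀ᶠ t in nhds (0:ℝ), t ≠ 0 → φ' t / t < 0 := by
    simpa [eventually_nhdsWithin_iff] using hev
  have H := (hmin.and hd).and hev'
  rw [Metric.eventually_nhds_iff] at H
  obtain ⟨δ, hδ, hH⟩ := H
  have hb : (0:ℝ) < δ / 2 := by linarith
  have hmem : ∀ t ∈ Set.Icc (0:ℝ) (δ/2), dist t 0 < δ := by
    intro t ht
    rw [Real.dist_eq, sub_zero, abs_of_nonneg ht.1]
    linarith [ht.2]
  have hderivneg : ∀ t ∈ Set.Ioo (0:ℝ) (δ/2), deriv φ t < 0 := by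
    intro t ht
    have h1 := hH (hmem t ⟨le_of_lt ht.1, le_of_lt ht.2⟩)
    rw [(h1.1.2).deriv]
    have h2 : φ' t / t < 0 := h1.2 (ne_of_gt ht.1)
    rcases div_neg_iff.1 h2 with ⟨h3, h4⟩ | ⟨h3, h4⟩
    · linarith [ht.1]
    · exact h3
  have hcont : ContinuousOn φ (Set.Icc (0:ℝ) (δ/2)) := by
    intro t ht
    exact ((hH (hmem t ht)).1.2).continuousAt.continuousWithinAt
  have hanti : StrictAntiOn φ (Set.Icc (0:ℝ) (δ/2)) := by
    apply strictAntiOn_of_deriv_neg (convex_Icc _ _) hcont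
    intro t ht
    rw [interior_Icc] at ht
    exact hderivneg t ht
  have h5 : φ (δ/2) < φ 0 :=
    hanti ⟨le_rfl, le_of_lt hb⟩ ⟨le_of_lt hb, le_rfl⟩ hb
  have h6 : φ 0 ≤ φ (δ/2) := by
    have hd5 : dist (δ/2) (0:ℝ) < δ := by
      rw [Real.dist_eq, sub_zero, abs_of_pos hb]; linarith
    exact (hH hd5).1.1
  linarith

/-- Derivatives of a `C²` function along a line. -/
lemma line_derivs {E : Type*} [NormedAddCommGroup E] [NormedSpace ℝ E]
    {g : E → ℝ} {x v : E} (hg : ContDiffAt ℝ 2 g x) :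
    (∀ᶠ t in nhds (0:ℝ),
        HasDerivAt (fun t : ℝ => g (x + t • v)) (fderiv ℝ g (x + t • v) v) t) ∧
      HasDerivAt (fun t : ℝ => fderiv ℝ g (x + t • v) v)
        (iteratedFDeriv ℝ 2 g x ![v, v]) 0 := by
  have hL : ∀ t : ℝ, HasDerivAt (fun t : ℝ => x + t • v) v t := by
    intro t
    simpa using ((hasDerivAt_id t).smul_const v).const_add x
  have hLcont : Filter.Tendsto (fun t : ℝ => x + t • v) (nhds 0) (nhds x) := by
    have : Continuous (fun t : ℝ => x + t • v) := by continuity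
    simpa using this.tendsto 0
  constructor
  · have hev : ∀ᶠ y in nhds x, ContDiffAt ℝ 2 g y := hg.eventually (by norm_num)
    filter_upwards [hLcont.eventually hev] with t ht
    have hdiff : DifferentiableAt ℝ g (x + t • v) := ht.differentiableAt two_ne_zero
    exact hdiff.hasFDerivAt.comp_hasDerivAt t (hL t)
  · have hG : ContDiffAt ℝ 1 (fderiv ℝ g) x := hg.fderiv_right (by norm_num)
    have hGd : DifferentiableAt ℝ (fderiv ℝ g) x := hG.differentiableAt one_ne_zero
    have h0 : x + (0:ℝ) • v = x := by simp
    have hψ : HasDerivAt (fun t : ℝ => fderiv ℝ g (x + t • v))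
        (fderiv ℝ (fderiv ℝ g) x v) 0 := by
      have hGd' : DifferentiableAt ℝ (fderiv ℝ g) (x + (0:ℝ) • v) := by rw [h0]; exact hGd
      have := hGd'.hasFDerivAt.comp_hasDerivAt 0 (hL 0)
      rwa [h0] at this
    have := ((ContinuousLinearMap.apply ℝ ℝ v).hasFDerivAt).comp_hasDerivAt 0 hψ
    have h2 : iteratedFDeriv ℝ 2 g x ![v, v] = fderiv ℝ (fderiv ℝ g) x v v := by
      rw [iteratedFDeriv_two_apply]
      simp
    rw [h2]
    exact this

/-- Second directional derivative is nonnegative at a global minimum, for C² functions. -/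
lemma iteratedFDeriv_two_nonneg_of_min {E : Type*} [NormedAddCommGroup E] [NormedSpace ℝ E]
    {g : E → ℝ} {x : E} (hg : ContDiffAt ℝ 2 g x) (hmin : ∀ y, g x ≤ g y) (v : E) :
    0 ≤ iteratedFDeriv ℝ 2 g x ![v, v] := by
  obtain ⟨ha, hb⟩ := line_derivs (v := v) hg
  have hlocmin : IsLocalMin (fun t : ℝ => g (x + t • v)) 0 :=
    Filter.Eventually.of_forall fun t => by simpa using hmin (x + t • v)
  exact second_deriv_test_aux hlocmin ha hb

theorem norm_laplacian_lower_bound' {n : ℕ} {F : Type*}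
    [NormedAddCommGroup F] [InnerProductSpace ℝ F] [FiniteDimensional ℝ F]
    (T : EuclideanSpace ℝ (Fin n) → F) (hT : ContDiff ℝ 2 T)
    (x : EuclideanSpace ℝ (Fin n)) (hx : T x ≠ 0) :
    ContDiffAt ℝ 2 (fun y => ‖T y‖) x ∧
      ⟪T x, ∑ i : Fin n, iteratedFDeriv ℝ 2 T x
          ![EuclideanSpace.single i 1, EuclideanSpace.single i 1]⟫ ≤
        ‖T x‖ * ∑ i : Fin n, iteratedFDeriv ℝ 2 (fun y => ‖T y‖) x
          ![EuclideanSpace.single i 1, EuclideanSpace.single i 1] := by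
  set f : EuclideanSpace ℝ (Fin n) → ℝ := fun y => ‖T y‖ with hf_def
  set u : EuclideanSpace ℝ (Fin n) → ℝ := fun y => ⟪T x, T y⟫ with hu_def
  have hr : (0:ℝ) < ‖T x‖ := norm_pos_iff.2 hx
  have hf : ContDiffAt ℝ 2 f x := hT.contDiffAt.norm ℝ hx
  refine ⟨hf, ?_⟩
  have hu : ContDiff ℝ 2 u := contDiff_const.inner ℝ hT
  -- iterated derivative of u via composition with innerSL
  have hcomp : ∀ m, iteratedFDeriv ℝ 2 u x m = ⟪T x, iteratedFDeriv ℝ 2 T x m⟫ := by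
    intro m
    have h1 : u = (innerSL ℝ (T x)) ∘ T := rfl
    rw [h1, (innerSL ℝ (T x)).iteratedFDeriv_comp_left (x := x) hT.contDiffAt (le_refl _)]
    simp
  -- the auxiliary function h with a global minimum at x
  set h : EuclideanSpace ℝ (Fin n) → ℝ := fun y => f y + (-‖T x‖⁻¹) • u y with hh_def
  have hh : ContDiffAt ℝ 2 h x := hf.add ((hu.contDiffAt).const_smul _)
  have hhx : h x = 0 := by
    simp only [hh_def, hf_def, hu_def, smul_eq_mul, real_inner_self_eq_norm_mul_norm]
    field_simp
    ring
  have hmin : ∀ y, h x ≤ h y := by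
    intro y
    rw [hhx]
    have hcs : ⟪T x, T y⟫ ≤ ‖T x‖ * ‖T y‖ := real_inner_le_norm _ _
    simp only [hh_def, hf_def, hu_def, smul_eq_mul]
    rw [neg_mul, ← sub_eq_add_neg, sub_nonneg]
    rw [inv_mul_le_iff₀ hr]
    exact hcs
  -- an open set where f is C²
  obtain ⟨s0, hs0, hfs0⟩ := hf.contDiffOn le_rfl (by simp)
  obtain ⟨s, hsub, hsopen, hxs⟩ := mem_nhds_iff.1 hs0
  have hfs : ContDiffOn ℝ 2 f s := hfs0.mono hsub
  have hus : ContDiffOn ℝ 2 u s := hu.contDiffOn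
  -- decomposition of the iterated derivative of h
  have hdecomp : ∀ m, iteratedFDeriv ℝ 2 h x m =
      iteratedFDeriv ℝ 2 f x m + (-‖T x‖⁻¹) • iteratedFDeriv ℝ 2 u x m := by
    intro m
    have hsmul : (fun y => (-‖T x‖⁻¹) • u y) = (-‖T x‖⁻¹) • u := rfl
    have e1 : iteratedFDeriv ℝ 2 h x = iteratedFDerivWithin ℝ 2 h s x :=
      (iteratedFDerivWithin_of_isOpen 2 hsopen hxs).symm
    have e2 : iteratedFDerivWithin ℝ 2 h s x =
        iteratedFDerivWithin ℝ 2 f s x + iteratedFDerivWithin ℝ 2 ((-‖T x‖⁻¹) • u) s x := by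
      exact iteratedFDerivWithin_add_apply' (hfs x hxs) ((hus.const_smul _) x hxs) hsopen.uniqueDiffOn hxs
    have e3 : iteratedFDerivWithin ℝ 2 ((-‖T x‖⁻¹) • u) s x =
        (-‖T x‖⁻¹) • iteratedFDerivWithin ℝ 2 u s x :=
      iteratedFDerivWithin_const_smul_apply (hus x hxs) hsopen.uniqueDiffOn hxs
    rw [e1, e2, e3, iteratedFDerivWithin_of_isOpen 2 hsopen hxs,
      iteratedFDerivWithin_of_isOpen 2 hsopen hxs]
    simp
  -- per-direction inequality
  have hkey : ∀ i : Fin n,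
      ⟪T x, iteratedFDeriv ℝ 2 T x
          ![EuclideanSpace.single i 1, EuclideanSpace.single i 1]⟫ ≤
        ‖T x‖ * iteratedFDeriv ℝ 2 f x
          ![EuclideanSpace.single i 1, EuclideanSpace.single i 1] := by
    intro i
    set v := EuclideanSpace.single i (1:ℝ)
    have h0 := iteratedFDeriv_two_nonneg_of_min hh hmin v
    rw [hdecomp ![v, v], ← hcomp ![v, v]] at *
    simp only [smul_eq_mul, neg_mul] at h0
    have h1 : ‖T x‖⁻¹ * (iteratedFDeriv ℝ 2 u x ![v, v]) ≤
        iteratedFDeriv ℝ 2 f x ![v, v] := by linarith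
    have h2 := mul_le_mul_of_nonneg_left h1 hr.le
    have h3 : ‖T x‖ * (‖T x‖⁻¹ * (iteratedFDeriv ℝ 2 u x ![v, v])) =
        iteratedFDeriv ℝ 2 u x ![v, v] := by field_simp
    linarith
  calc ⟪T x, ∑ i : Fin n, iteratedFDeriv ℝ 2 T x
          ![EuclideanSpace.single i 1, EuclideanSpace.single i 1]⟫
      = ∑ i : Fin n, ⟪T x, iteratedFDeriv ℝ 2 T x
          ![EuclideanSpace.single i 1, EuclideanSpace.single i 1]⟫ := inner_sum _ _ _
    _ ≤ ∑ i : Fin n, ‖T x‖ * iteratedFDeriv ℝ 2 f x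
          ![EuclideanSpace.single i 1, EuclideanSpace.single i 1] :=
        Finset.sum_le_sum fun i _ => hkey i
    _ = ‖T x‖ * ∑ i : Fin n, iteratedFDeriv ℝ 2 f x
          ![EuclideanSpace.single i 1, EuclideanSpace.single i 1] := by
        rw [Finset.mul_sum]


/-- Let `F` be a finite-dimensional real inner product space and let
`T : ℝⁿ → F` be twice continuously differentiable. At every point `x` where `T x ≠ 0`, the
function `y ↦ ‖T y‖` is twice continuously differentiable in a neighborhood of `x` and
satisfies `‖T x‖·Δ(‖T‖)(x) ≥ ⟨T x, ΔT x⟩`. -/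
theorem norm_laplacian_lower_bound {n : ℕ} {F : Type*}
    [NormedAddCommGroup F] [InnerProductSpace ℝ F] [FiniteDimensional ℝ F]
    (T : EuclideanSpace ℝ (Fin n) → F) (hT : ContDiff ℝ 2 T)
    (x : EuclideanSpace ℝ (Fin n)) (hx : T x ≠ 0) :
    ContDiffAt ℝ 2 (fun y => ‖T y‖) x ∧
      ⟪T x, lap T x⟫ ≤ ‖T x‖ * lap (fun y => ‖T y‖) x := by
  unfold lap
  exact norm_laplacian_lower_bound' T hT x hx
end

section
/- Let F be a finite-dimensional real inner product space, let p ≥ 2 be a real number, and let T : ℝⁿ → F be twice continuously differentiable. At every point x where T(x) ≠ 0, the function y ↦ ‖T(y)‖^{p/2} is twice continuously differentiable in a neighborhood of x and satisfies −Δ(‖T‖^{p/2})(x) ≤ −(p/2)·‖T(x)‖^{(p/2)−2}·⟨T(x), ΔT(x)⟩. -/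
open scoped RealInnerProductSpace
open Topology Filter

theorem lap_eq_sum {n : ℕ} {F : Type*} [NormedAddCommGroup F] [NormedSpace ℝ F]
    (T : EuclideanSpace ℝ (Fin n) → F) (x : EuclideanSpace ℝ (Fin n)) :
    lap T x = ∑ i : Fin n,
      fderiv ℝ (fderiv ℝ T) x (EuclideanSpace.single i 1) (EuclideanSpace.single i 1) := by
  unfold lap
  refine Finset.sum_congr rfl fun i _ => ?_
  rw [iteratedFDeriv_two_apply]
  simp

/-- Let `F` be a finite-dimensional real inner product space, let `p ≥ 2` be a
real number, and let `T : ℝⁿ → F` be twice continuously differentiable. At every point `x`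
where `T x ≠ 0`, the function `y ↦ ‖T y‖^{p/2}` is twice continuously differentiable in a
neighborhood of `x` and satisfies
`−Δ(‖T‖^{p/2})(x) ≤ −(p/2)·‖T x‖^{(p/2)−2}·⟨T x, ΔT x⟩`. -/
theorem norm_pow_laplacian_bound {n : ℕ} {F : Type*}
    [NormedAddCommGroup F] [InnerProductSpace ℝ F] [FiniteDimensional ℝ F]
    (p : ℝ) (hp : 2 ≤ p)
    (T : EuclideanSpace ℝ (Fin n) → F) (hT : ContDiff ℝ 2 T)
    (x : EuclideanSpace ℝ (Fin n)) (hx : T x ≠ 0) :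
    ContDiffAt ℝ 2 (fun y => ‖T y‖ ^ (p / 2)) x ∧
      -(lap (fun y => ‖T y‖ ^ (p / 2)) x) ≤
        -(p / 2 * ‖T x‖ ^ (p / 2 - 2) * ⟪T x, lap T x⟫) := by
  have hT1 : Differentiable ℝ T := hT.differentiable (by norm_num)
  have hTd : ContDiff ℝ 1 (fderiv ℝ T) := hT.fderiv_right (by norm_num)
  have hTd1 : Differentiable ℝ (fderiv ℝ T) := hTd.differentiable (by norm_num)
  set u : EuclideanSpace ℝ (Fin n) → ℝ := fun y => ⟪T y, T y⟫ with hu_def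
  have hu : ContDiff ℝ 2 u := hT.inner ℝ hT
  have hu1 : Differentiable ℝ u := hu.differentiable (by norm_num)
  have h2 : ∀ y, u y = ‖T y‖ ^ (2 : ℝ) := by
    intro y
    simp only [hu_def]
    rw [real_inner_self_eq_norm_sq, ← Real.rpow_natCast (‖T y‖) 2]
    norm_num
  have hnx : 0 < ‖T x‖ := norm_pos_iff.mpr hx
  have hux : 0 < u x := by
    rw [h2]
    positivity
  have huderiv : ∀ y, HasFDerivAt u
      ((fderivInnerCLM ℝ (T y, T y)).comp ((fderiv ℝ T y).prod (fderiv ℝ T y))) y :=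
    fun y => (hT1 y).hasFDerivAt.inner ℝ (hT1 y).hasFDerivAt
  have hud : ∀ y w, fderiv ℝ u y w = 2 * ⟪T y, fderiv ℝ T y w⟫ := by
    intro y w
    rw [(huderiv y).fderiv]
    simp only [ContinuousLinearMap.comp_apply, ContinuousLinearMap.prod_apply,
      fderivInnerCLM_apply]
    rw [real_inner_comm ((fderiv ℝ T y) w) (T y)]
    ring
  have hfe : (fun y => ‖T y‖ ^ (p / 2)) = fun y => u y ^ (p / 4) := by
    funext y
    rw [h2, ← Real.rpow_mul (norm_nonneg _)]
    congr 1
    ring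
  have hf2 : ContDiffAt ℝ 2 (fun y => u y ^ (p / 4)) x :=
    hu.contDiffAt.rpow_const_of_ne (ne_of_gt hux)
  have hcd : ContDiffAt ℝ 2 (fun y => ‖T y‖ ^ (p / 2)) x := by rw [hfe]; exact hf2
  refine ⟨hcd, ?_⟩
  have hfd : DifferentiableAt ℝ (fderiv ℝ (fun y => u y ^ (p / 4))) x :=
    (hf2.fderiv_right (m := 1) (by norm_num)).differentiableAt (by norm_num)
  have hpos : ∀ᶠ y in 𝓝 x, 0 < u y :=
    hu.continuous.continuousAt (Ioi_mem_nhds hux)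
  -- key second derivative formula
  have key : ∀ v : EuclideanSpace ℝ (Fin n),
      fderiv ℝ (fderiv ℝ (fun y => u y ^ (p / 4))) x v v =
        p / 4 * ((p / 4 - 1) * u x ^ (p / 4 - 1 - 1) * (2 * ⟪T x, fderiv ℝ T x v⟫) *
            (2 * ⟪T x, fderiv ℝ T x v⟫)) +
          p / 4 * (u x ^ (p / 4 - 1) *
            (2 * (⟪fderiv ℝ T x v, fderiv ℝ T x v⟫ + ⟪T x, fderiv ℝ (fderiv ℝ T) x v v⟫))) := by
    intro v
    have step1 : fderiv ℝ (fun y => fderiv ℝ (fun y => u y ^ (p / 4)) y v) x v =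
        fderiv ℝ (fderiv ℝ (fun y => u y ^ (p / 4))) x v v := by
      rw [fderiv_clm_apply hfd (differentiableAt_const v)]
      simp
    have hev : (fun y => p / 4 * u y ^ (p / 4 - 1) * (2 * ⟪T y, fderiv ℝ T y v⟫)) =ᶠ[𝓝 x]
        (fun y => fderiv ℝ (fun y => u y ^ (p / 4)) y v) := by
      filter_upwards [hpos] with y hy
      have hfy : HasFDerivAt (fun y => u y ^ (p / 4))
          ((p / 4 * u y ^ (p / 4 - 1)) • fderiv ℝ u y) y :=
        (hu1 y).hasFDerivAt.rpow_const (Or.inl (ne_of_gt hy))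
      rw [hfy.fderiv]
      simp only [ContinuousLinearMap.smul_apply, smul_eq_mul, hud]
    have hB : HasFDerivAt (fun y => fderiv ℝ T y v)
        ((fderiv ℝ T x).comp (0 : EuclideanSpace ℝ (Fin n) →L[ℝ] EuclideanSpace ℝ (Fin n)) +
          (fderiv ℝ (fderiv ℝ T) x).flip v) x :=
      (hTd1 x).hasFDerivAt.clm_apply (hasFDerivAt_const v x)
    have h3 := (hT1 x).hasFDerivAt.inner ℝ hB
    have h4 := h3.const_mul (2 : ℝ)
    have h1 : HasFDerivAt (fun y => u y ^ (p / 4 - 1))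
        (((p / 4 - 1) * u x ^ (p / 4 - 1 - 1)) • fderiv ℝ u x) x :=
      (hu1 x).hasFDerivAt.rpow_const (Or.inl (ne_of_gt hux))
    have h5 := (h1.const_mul (p / 4)).mul h4
    have h6 := h5.congr_of_eventuallyEq hev.symm
    rw [← step1, h6.fderiv]
    simp only [ContinuousLinearMap.add_apply, ContinuousLinearMap.smul_apply,
      ContinuousLinearMap.comp_apply, ContinuousLinearMap.flip_apply,
      ContinuousLinearMap.prod_apply, fderivInnerCLM_apply, ContinuousLinearMap.zero_apply,
      map_zero, zero_add, smul_eq_mul, hud]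
    ring
  -- rewrite both Laplacians
  rw [hfe, lap_eq_sum, lap_eq_sum, inner_sum, Finset.mul_sum]
  rw [neg_le_neg_iff]
  refine Finset.sum_le_sum fun i _ => ?_
  rw [key (EuclideanSpace.single i 1)]
  set a : F := fderiv ℝ T x (EuclideanSpace.single i 1) with ha
  set c : ℝ := ⟪T x, a⟫ with hc
  set q : ℝ := ⟪a, a⟫ with hq
  set d : ℝ := ⟪T x, fderiv ℝ (fderiv ℝ T) x (EuclideanSpace.single i 1)
    (EuclideanSpace.single i 1)⟫ with hd
  have hr : ‖T x‖ ^ (p / 2 - 2) = u x ^ (p / 4 - 1) := by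
    rw [h2, ← Real.rpow_mul (norm_nonneg _)]
    congr 1
    ring
  have hr12 : u x ^ (p / 4 - 1) = u x ^ (p / 4 - 1 - 1) * u x := by
    rw [← Real.rpow_add_one hux.ne']
    congr 1
    ring
  have hqnn : 0 ≤ q := real_inner_self_nonneg
  have hcs : c * c ≤ u x * q := real_inner_mul_inner_self_le (T x) a
  have hr2 : 0 ≤ u x ^ (p / 4 - 1 - 1) := Real.rpow_nonneg hux.le _
  rw [hr, hr12]
  rcases le_total p 4 with h4 | h4
  · nlinarith [mul_nonneg (mul_nonneg (mul_nonneg (by nlinarith : (0:ℝ) ≤ p * (p - 2)) hr2)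
        hux.le) hqnn,
      mul_nonneg (mul_nonneg (by nlinarith : (0:ℝ) ≤ p * (4 - p)) hr2)
        (sub_nonneg.mpr hcs)]
  · nlinarith [mul_nonneg (mul_nonneg (by nlinarith : (0:ℝ) ≤ p * (p - 4)) hr2)
        (mul_self_nonneg c),
      mul_nonneg (mul_nonneg (mul_nonneg (by linarith : (0:ℝ) ≤ p) hr2) hux.le) hqnn]
end

section
/- Let c₂ ≥ 0 and r₀ > 0, and let f : (0, r₀] → ℝ be a nonnegative differentiable function satisfying f(r) ≤ (r/4)·f′(r) + c₂·r⁴ for all r ∈ (0, r₀]. Then for all r ∈ (0, r₀], f(r) ≤ ( r₀^{−4}·f(r₀) + 4·c₂·ln(r₀/r) )·r⁴. -/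
/-- Let `c₂ ≥ 0` and `r₀ > 0`, and let `f : (0, r₀] → ℝ` be a nonnegative
differentiable function satisfying `f(r) ≤ (r/4)·f′(r) + c₂·r⁴` for all `r ∈ (0, r₀]`.
Then for all `r ∈ (0, r₀]`, `f(r) ≤ (r₀^{−4}·f(r₀) + 4·c₂·ln(r₀/r))·r⁴`. -/
theorem curvature_decay_ODE_borderline (c₂ r₀ : ℝ) (hc₂ : 0 ≤ c₂) (hr₀ : 0 < r₀)
    (f f' : ℝ → ℝ)
    (hderiv : ∀ r ∈ Set.Ioc (0 : ℝ) r₀, HasDerivAt f (f' r) r)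
    (hnonneg : ∀ r ∈ Set.Ioc (0 : ℝ) r₀, 0 ≤ f r)
    (hineq : ∀ r ∈ Set.Ioc (0 : ℝ) r₀, f r ≤ r / 4 * f' r + c₂ * r ^ 4) :
    ∀ r ∈ Set.Ioc (0 : ℝ) r₀,
      f r ≤ ((r₀ ^ 4)⁻¹ * f r₀ + 4 * c₂ * Real.log (r₀ / r)) * r ^ 4 := by
  intro r hr
  obtain ⟨hr0, hrr0⟩ := hr
  set g : ℝ → ℝ := fun x => (x ^ 4)⁻¹ * f x + 4 * c₂ * Real.log x with hg
  -- g has nonnegative derivative on (0, r₀]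
  have hgd : ∀ x ∈ Set.Ioc (0 : ℝ) r₀, HasDerivAt g
      ((-(4 * x ^ 3) / (x ^ 4) ^ 2) * f x + (x ^ 4)⁻¹ * f' x + 4 * c₂ * x⁻¹) x := by
    intro x hx
    have hx0 : x ≠ 0 := ne_of_gt hx.1
    have h1 : HasDerivAt (fun y : ℝ => (y ^ 4)⁻¹) (-(4 * x ^ 3) / (x ^ 4) ^ 2) x := by
      have := (hasDerivAt_pow 4 x).inv (pow_ne_zero 4 hx0)
      exact this
    have h2 := h1.mul (hderiv x hx)
    have h3 := (Real.hasDerivAt_log hx0).const_mul (4 * c₂)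
    exact h2.add h3
  have hmono : MonotoneOn g (Set.Icc r r₀) := by
    apply monotoneOn_of_deriv_nonneg (convex_Icc r r₀)
    · intro x hx
      exact (hgd x ⟨lt_of_lt_of_le hr0 hx.1, hx.2⟩).continuousAt.continuousWithinAt
    · intro x hx
      rw [interior_Icc] at hx
      exact ((hgd x ⟨lt_trans hr0 hx.1, le_of_lt hx.2⟩).differentiableAt).differentiableWithinAt
    · intro x hx
      rw [interior_Icc] at hx
      have hx' : x ∈ Set.Ioc (0 : ℝ) r₀ := ⟨lt_trans hr0 hx.1, le_of_lt hx.2⟩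
      rw [(hgd x hx').deriv]
      have key := hineq x hx'
      have hxp : (0 : ℝ) < x := hx'.1
      have expand : (-(4 * x ^ 3) / (x ^ 4) ^ 2) * f x + (x ^ 4)⁻¹ * f' x + 4 * c₂ * x⁻¹
          = (4 / x ^ 5) * (x / 4 * f' x + c₂ * x ^ 4 - f x) := by
        field_simp
        ring
      rw [expand]
      apply mul_nonneg (by positivity)
      linarith
  have hle : g r ≤ g r₀ := hmono ⟨le_refl r, hrr0⟩ ⟨hrr0, le_refl r₀⟩ hrr0
  have hr4 : (0 : ℝ) < r ^ 4 := by positivity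
  have hlog : Real.log (r₀ / r) = Real.log r₀ - Real.log r :=
    Real.log_div (ne_of_gt hr₀) (ne_of_gt hr0)
  have h1 : (r ^ 4)⁻¹ * f r + 4 * c₂ * Real.log r
      ≤ (r₀ ^ 4)⁻¹ * f r₀ + 4 * c₂ * Real.log r₀ := hle
  rw [hlog]
  have h2 := mul_le_mul_of_nonneg_right h1 hr4.le
  have h3 : (r ^ 4)⁻¹ * f r * r ^ 4 = f r := by field_simp
  nlinarith [h2, h3]
end
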